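/- Let X be a nonempty finite set and R a family of subsets of X. Let ν > 0 and 0 < α < 1. If a nonempty subset Z ⊆ X is a relative (ν,α)-approximation for (X,R), then Z is a (ν,α)-sample for (X,R). -/

import Mathlib

/-- The measure of a range `r` in a finite set `Z`: `|Z ∩ r| / |Z|`. -/
noncomputable def meas {γ : Type*} (r : Set γ) (Z : Finset γ) : ℝ :=
  (((↑Z : Set γ) ∩ r).ncard : ℝ) / (Z.card : ℝ)

/-- The distance `d_ν(a,b) = |a − b| / (a + b + ν)`. -/
noncomputable def dnu (ν a b : ℝ) : ℝ := |a - b| / (a + b + ν)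

/-- If a nonempty `Z ⊆ X` is a relative `(ν,α)`-approximation for `(X,R)` with
`ν > 0` and `0 < α < 1`, then `Z` is a `(ν,α)`-sample for `(X,R)`. -/
theorem relative_approx_to_sample {γ : Type*} (X : Finset γ) (hX : X.Nonempty)
    (R : Set (Set γ)) (ν α : ℝ) (hν : 0 < ν) (hα0 : 0 < α) (hα : α < 1)
    (Z : Finset γ) (hZX : Z ⊆ X) (hZ : Z.Nonempty)
    (hrel : ∀ r ∈ R,
      (ν ≤ meas r X →
        (1 - α) * meas r X ≤ meas r Z ∧ meas r Z ≤ (1 + α) * meas r X) ∧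
      (meas r X ≤ ν → |meas r Z - meas r X| ≤ α * ν)) :
    ∀ r ∈ R, dnu ν (meas r Z) (meas r X) < α := by
  intro r hr
  obtain ⟨h1, h2⟩ := hrel r hr
  have ha : 0 ≤ meas r Z := by unfold meas; positivity
  have hb : 0 ≤ meas r X := by unfold meas; positivity
  set a := meas r Z
  set b := meas r X
  have hden : 0 < a + b + ν := by linarith
  rw [dnu, div_lt_iff₀ hden]
  rcases le_total ν b with h | h
  · obtain ⟨hl, hu⟩ := h1 h
    rw [abs_sub_lt_iff]
    constructor <;> nlinarith
  · have habs1 := h2 h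
    have habs2 : |a - b| ≤ a + b := abs_le.mpr ⟨by linarith, by linarith⟩
    have habs0 : 0 ≤ |a - b| := abs_nonneg _
    nlinarith [mul_le_mul_of_nonneg_left habs2 hα0.le, mul_le_mul_of_nonneg_left habs1 (by linarith : (0:ℝ) ≤ 1 - α), mul_pos (mul_pos hα0 hα0) hν]
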